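/- Let K[u] = (d₂/(3a₀) u² + c₁u + c₀) ∂²u/∂x₁² + (2d₂/(3a₀) u + c₁)(∂u/∂x₁)² + β₀ ∂²u/∂x₂² + (d₂u² + d₁u + d₀)∂u/∂x₁ + λ₀ ∂u/∂x₂ + (−2a₀²c₁ + a₀d₁)u² + k₁u with a₀ ≠ 0. Then for all real δ₁, δ₂: K[δ₁e^{−a₀x₁} + δ₂e^{−(a₀x₁ + b₁x₂)}] = (a₀²c₀ − d₀a₀ + k₁)δ₁ e^{−a₀x₁} + (k₁ + β₀b₁² − λ₀b₁ + c₀a₀² − a₀d₀)δ₂ e^{−(a₀x₁ + b₁x₂)}. In particular span{e^{−a₀x₁}, e^{−(a₀x₁+b₁x₂)}} is invariant under K. -/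

import Mathlib

open Real

private lemma derivX (δ₁ δ₂ a₀ b₁ y x : ℝ) :
    deriv (fun x' => δ₁ * exp (-a₀ * x') + δ₂ * exp (-(a₀ * x' + b₁ * y))) x
      = -a₀ * (δ₁ * exp (-a₀ * x)) + -a₀ * (δ₂ * exp (-(a₀ * x + b₁ * y))) := by
  have h1 : HasDerivAt (fun x' : ℝ => δ₁ * exp (-a₀ * x'))
      (δ₁ * (exp (-a₀ * x) * (-a₀ * 1))) x :=
    (((hasDerivAt_id x).const_mul (-a₀)).exp).const_mul δ₁
  have h2 : HasDerivAt (fun x' : ℝ => δ₂ * exp (-(a₀ * x' + b₁ * y)))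
      (δ₂ * (exp (-(a₀ * x + b₁ * y)) * -(a₀ * 1))) x :=
    (((((hasDerivAt_id x).const_mul a₀).add_const (b₁ * y)).neg).exp).const_mul δ₂
  have := (show HasDerivAt (fun x' => δ₁ * exp (-a₀ * x') + δ₂ * exp (-(a₀ * x' + b₁ * y))) _ x
    from h1.add h2).deriv
  rw [this]; ring

private lemma derivY (C D a₀ b₁ x y : ℝ) :
    deriv (fun y' => C + D * exp (-(a₀ * x + b₁ * y'))) y
      = -b₁ * (D * exp (-(a₀ * x + b₁ * y))) := by
  have h2 : HasDerivAt (fun y' : ℝ => C + D * exp (-(a₀ * x + b₁ * y')))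
      (0 + D * (exp (-(a₀ * x + b₁ * y)) * -(b₁ * 1))) y :=
    (hasDerivAt_const y _).add
      ((((((hasDerivAt_id y).const_mul b₁).const_add (a₀ * x)).neg).exp).const_mul D)
  rw [h2.deriv]; ring

/-- the cubic operator K maps the exponential subspace
`span{e^{−a₀x₁}, e^{−(a₀x₁+b₁x₂)}}` into itself, acting diagonally. -/
theorem stmt1 (a₀ b₁ c₀ c₁ d₀ d₁ d₂ b0 l0 k₁ : ℝ) (ha₀ : a₀ ≠ 0)
    (K : (ℝ → ℝ → ℝ) → ℝ → ℝ → ℝ)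
    (hK : ∀ u : ℝ → ℝ → ℝ, ∀ x y : ℝ,
      K u x y =
        (d₂ / (3 * a₀) * (u x y) ^ 2 + c₁ * u x y + c₀) *
          deriv (fun x' => deriv (fun x'' => u x'' y) x') x +
        (2 * d₂ / (3 * a₀) * u x y + c₁) * (deriv (fun x' => u x' y) x) ^ 2 +
        b0 * deriv (fun y' => deriv (fun y'' => u x y'') y') y +
        (d₂ * (u x y) ^ 2 + d₁ * u x y + d₀) * deriv (fun x' => u x' y) x +
        l0 * deriv (fun y' => u x y') y +
        (-2 * a₀ ^ 2 * c₁ + a₀ * d₁) * (u x y) ^ 2 + k₁ * u x y) :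
    ∀ δ₁ δ₂ : ℝ, ∀ x y : ℝ,
      K (fun x₁ x₂ => δ₁ * exp (-a₀ * x₁) + δ₂ * exp (-(a₀ * x₁ + b₁ * x₂))) x y =
        (a₀ ^ 2 * c₀ - d₀ * a₀ + k₁) * δ₁ * exp (-a₀ * x) +
        (k₁ + b0 * b₁ ^ 2 - l0 * b₁ + c₀ * a₀ ^ 2 - a₀ * d₀) * δ₂ *
          exp (-(a₀ * x + b₁ * y)) := by
  intro δ₁ δ₂ x y
  rw [hK]
  have hdx : (fun x' => deriv (fun x'' =>
      δ₁ * exp (-a₀ * x'') + δ₂ * exp (-(a₀ * x'' + b₁ * y))) x')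
      = fun x' => (-a₀ * δ₁) * exp (-a₀ * x') + (-a₀ * δ₂) * exp (-(a₀ * x' + b₁ * y)) := by
    funext x'
    rw [derivX δ₁ δ₂ a₀ b₁ y x']; ring
  have hdy : (fun y' => deriv (fun y'' =>
      δ₁ * exp (-a₀ * x) + δ₂ * exp (-(a₀ * x + b₁ * y''))) y')
      = fun y' => 0 + (-b₁ * δ₂) * exp (-(a₀ * x + b₁ * y')) := by
    funext y'
    rw [derivY (δ₁ * exp (-a₀ * x)) δ₂ a₀ b₁ x y']; ring
  simp only [hdx, hdy]
  rw [derivX (-a₀ * δ₁) (-a₀ * δ₂) a₀ b₁ y x,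
    derivY 0 (-b₁ * δ₂) a₀ b₁ x y]
  field_simp
  ring
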